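/- Let ρ_k ≥ 0 be a sequence of nonnegative reals and φ_k an orthonormal family in L²(0,1) ∩ H¹(0,1). Set n(x) = Σ_k ρ_k |φ_k(x)|², and assume E := Σ_k ρ_k(‖φ_k‖_{L²}² + ‖φ_k'‖_{L²}²) < ∞ and J := (Σ_k ρ_k²)^{1/2} < ∞. Then there is a universal constant C with ‖n‖_{L^∞(0,1)} ≤ C · J^{1/4} · E^{3/4}. -/

import Mathlib

open MeasureTheory Set

local notation "⟪" x ", " y "⟫" => @inner ℂ _ _ x y

/-- Elementary Cauchy–Schwarz for set integrals. -/
private lemma setInt_cs {g : ℝ → ℝ} {s : Set ℝ} (hg0 : ∀ x, 0 ≤ g x)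
    (hg : IntegrableOn g s) (hg2 : IntegrableOn (fun x => g x ^ 2) s)
    (hm : volume s ≠ ⊤) :
    ∫ x in s, g x ≤ Real.sqrt (volume s).toReal * Real.sqrt (∫ x in s, g x ^ 2) := by
  set m := (volume s).toReal with hmdef
  have hm0 : 0 ≤ m := ENNReal.toReal_nonneg
  set Q := ∫ x in s, g x ^ 2 with hQdef
  have hQ0 : 0 ≤ Q := setIntegral_nonneg_of_ae_restrict
    (Filter.Eventually.of_forall fun x => sq_nonneg _)
  have hI0 : 0 ≤ ∫ x in s, g x := setIntegral_nonneg_of_ae_restrict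
    (Filter.Eventually.of_forall fun x => hg0 x)
  have key : ∀ t : ℝ, 0 < t → (∫ x in s, g x) ≤ (t * Q + m / t) / 2 := by
    intro t ht
    have hpt : ∀ x, g x ≤ (t * g x ^ 2 + 1 / t) / 2 := by
      intro x
      have h1 : 0 ≤ (t * g x - 1) ^ 2 / t := div_nonneg (sq_nonneg _) ht.le
      have h2 : (t * g x - 1) ^ 2 / t = t * g x ^ 2 - 2 * g x + 1 / t := by
        field_simp; ring
      nlinarith [h1, h2]
    have hconst : IntegrableOn (fun _ : ℝ => (1:ℝ) / t) s :=
      integrableOn_const hm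
    have hint : (∫ x in s, g x) ≤ ∫ x in s, (t * g x ^ 2 + 1 / t) / 2 :=
      integral_mono hg (((hg2.const_mul t).add hconst).div_const 2) (fun x => hpt x)
    have hcalc : (∫ x in s, (t * g x ^ 2 + 1 / t) / 2) = (t * Q + m / t) / 2 := by
      rw [integral_div, integral_add (hg2.const_mul t) hconst, integral_const_mul,
        setIntegral_const]
      rw [measureReal_def, smul_eq_mul, ← hQdef, ← hmdef]
      ring
    linarith [hint, hcalc ▸ hint]
  rcases eq_or_lt_of_le hm0 with hm0' | hmpos
  · have : volume s = 0 := by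
      rcases (ENNReal.toReal_eq_zero_iff _).1 hm0'.symm with h | h
      · exact h
      · exact absurd h hm
    rw [Measure.restrict_eq_zero.2 this, integral_zero_measure]
    positivity
  rcases eq_or_lt_of_le hQ0 with hQ0' | hQpos
  · have hle : (∫ x in s, g x) ≤ 0 := by
      by_contra hpos
      push_neg at hpos
      have := key (m / (∫ x in s, g x)) (div_pos hmpos hpos)
      rw [← hQ0'] at this
      have e : m / (m / ∫ x in s, g x) = ∫ x in s, g x := by field_simp
      rw [mul_zero, zero_add, e] at this
      linarith
    have : (∫ x in s, g x) = 0 := le_antisymm hle hI0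
    rw [this]; positivity
  · have ht : 0 < Real.sqrt m / Real.sqrt Q :=
      div_pos (Real.sqrt_pos.2 hmpos) (Real.sqrt_pos.2 hQpos)
    have := key _ ht
    have hsm : Real.sqrt m * Real.sqrt m = m := Real.mul_self_sqrt hm0
    have hsq : Real.sqrt Q * Real.sqrt Q = Q := Real.mul_self_sqrt hQ0
    have h1 : Real.sqrt m / Real.sqrt Q * Q = Real.sqrt m * Real.sqrt Q := by
      rw [div_mul_eq_mul_div, div_eq_iff (Real.sqrt_pos.2 hQpos).ne']
      linear_combination (-1 : ℝ) * Real.sqrt m * hsq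
    have h2 : m / (Real.sqrt m / Real.sqrt Q) = Real.sqrt m * Real.sqrt Q := by
      rw [div_div_eq_mul_div]
      rw [div_eq_iff (Real.sqrt_pos.2 hmpos).ne']
      linear_combination (-1 : ℝ) * Real.sqrt Q * hsm
    rw [h1, h2] at this
    linarith
private lemma avg_bound {φ D : ℝ → ℂ} (hder : ∀ y ∈ Ioo (0:ℝ) 1, HasDerivAt φ (D y) y)
    (hφ : IntegrableOn φ (Ioo 0 1)) (hD : IntegrableOn D (Ioo 0 1))
    {a b x : ℝ} (ha : 0 ≤ a) (hab : a < b) (hb : b ≤ 1)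
    (hx : x ∈ Ioo (0:ℝ) 1) (hxa : a ≤ x) (hxb : x ≤ b) :
    ‖(b - a) • φ x - ∫ y in Ioo a b, φ y‖ ≤ (b - a) * ∫ y in Ioo a b, ‖D y‖ := by
  have hIsub : Ioo a b ⊆ Ioo 0 1 := Ioo_subset_Ioo ha hb
  have hφI : IntegrableOn φ (Ioo a b) := hφ.mono_set hIsub
  have hDI : IntegrableOn (fun t => ‖D t‖) (Ioo a b) := (hD.mono_set hIsub).norm
  have hDIcc : IntegrableOn (fun t => ‖D t‖) (Icc a b) := by
    rw [IntegrableOn, Measure.restrict_congr_set Ioo_ae_eq_Icc.symm]; exact hDI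
  have hIeq : (∫ t in Icc a b, ‖D t‖) = ∫ t in Ioo a b, ‖D t‖ :=
    integral_Icc_eq_integral_Ioo.trans rfl
  have hpt : ∀ y ∈ Ioo a b, ‖φ x - φ y‖ ≤ ∫ t in Ioo a b, ‖D t‖ := by
    intro y hy
    have hyx : uIcc y x ⊆ Ioo (0:ℝ) 1 :=
      Set.ordConnected_Ioo.uIcc_subset (hIsub hy) hx
    have hyx' : uIcc y x ⊆ Icc a b :=
      Set.ordConnected_Icc.uIcc_subset ⟨hy.1.le, hy.2.le⟩ ⟨hxa, hxb⟩
    have hint : IntervalIntegrable D volume y x := by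
      rw [intervalIntegrable_iff]
      exact (hD.mono_set (fun t ht => hyx (uIoc_subset_uIcc ht)))
    have hftc : (∫ t in y..x, D t) = φ x - φ y :=
      intervalIntegral.integral_eq_sub_of_hasDerivAt (fun t ht => hder t (hyx ht)) hint
    rw [← hftc]
    refine (intervalIntegral.norm_integral_le_integral_norm_uIoc).trans ?_
    rw [← hIeq]
    exact setIntegral_mono_set hDIcc
      (Filter.Eventually.of_forall fun t => norm_nonneg _)
      (HasSubset.Subset.eventuallyLE (fun t ht => hyx' (uIoc_subset_uIcc ht)))
  have hsplit : ((b - a) • φ x - ∫ y in Ioo a b, φ y) = ∫ y in Ioo a b, (φ x - φ y) := by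
    rw [integral_sub (integrable_const (φ x)) hφI]
    congr 1
    rw [setIntegral_const, measureReal_def, Real.volume_Ioo, ENNReal.toReal_ofReal (by linarith)]
  rw [hsplit]
  calc ‖∫ y in Ioo a b, (φ x - φ y)‖ ≤ ∫ y in Ioo a b, ‖φ x - φ y‖ :=
        norm_integral_le_integral_norm _
    _ ≤ ∫ _y in Ioo a b, (∫ t in Ioo a b, ‖D t‖) := by
        exact setIntegral_mono_on ((integrable_const _).sub hφI).norm
          (integrableOn_const (by simp [Real.volume_Ioo]))
          measurableSet_Ioo (fun y hy => hpt y hy)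
    _ = (b - a) * ∫ t in Ioo a b, ‖D t‖ := by
        rw [setIntegral_const, measureReal_def, Real.volume_Ioo, ENNReal.toReal_ofReal (by linarith), smul_eq_mul]
private lemma bessel_indicator {φ : ℕ → ℝ → ℂ}
    (hmem : ∀ k, MemLp (φ k) 2 (volume.restrict (Ioo (0:ℝ) 1)))
    (horth : ∀ j k, (∫ x in Ioo (0:ℝ) 1, (starRingEnd ℂ) (φ j x) * φ k x) =
      if j = k then 1 else 0)
    {I : Set ℝ} (hI : MeasurableSet I) (hIsub : I ⊆ Ioo 0 1) :
    Summable (fun k => ‖∫ x in I, φ k x‖ ^ 2) ∧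
      ∑' k, ‖∫ x in I, φ k x‖ ^ 2 ≤ (volume I).toReal := by
  set μ := volume.restrict (Ioo (0:ℝ) 1) with hμ
  have hμI : μ I = volume I := by
    rw [hμ, Measure.restrict_apply hI, inter_eq_self_of_subset_left hIsub]
  have hμIfin : μ I ≠ ⊤ := by
    rw [hμI]
    exact ((measure_mono hIsub).trans_lt (by simp [Real.volume_Ioo])).ne
  set Φ : ℕ → (ℝ →₂[μ] ℂ) := fun k => (hmem k).toLp (φ k) with hΦ
  have hVmem : MemLp (I.indicator fun _ => (1:ℂ)) 2 μ :=
    memLp_indicator_const 2 hI 1 (Or.inr hμIfin)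
  set V : ℝ →₂[μ] ℂ := hVmem.toLp _ with hV
  have hinner : ∀ k, ⟪V, Φ k⟫ = ∫ x in I, φ k x := by
    intro k
    rw [MeasureTheory.L2.inner_def]
    have : ∫ a, ⟪V a, Φ k a⟫ ∂μ = ∫ a, (I.indicator (fun t => φ k t)) a ∂μ := by
      refine integral_congr_ae ?_
      filter_upwards [hVmem.coeFn_toLp, (hmem k).coeFn_toLp] with a h1 h2
      rw [h1, h2, RCLike.inner_apply]
      by_cases ha : a ∈ I <;> simp [ha]
    rw [this, integral_indicator hI, hμ, Measure.restrict_restrict hI,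
      inter_eq_self_of_subset_left hIsub]
  have hnormV : ‖V‖ ^ 2 = (volume I).toReal := by
    rw [InnerProductSpace.norm_sq_eq_re_inner (𝕜 := ℂ)]
    have : ⟪V, V⟫ = ∫ a, (I.indicator (fun _ => (1:ℂ))) a ∂μ := by
      rw [MeasureTheory.L2.inner_def]
      refine integral_congr_ae ?_
      filter_upwards [hVmem.coeFn_toLp] with a h1
      rw [h1, RCLike.inner_apply]
      by_cases ha : a ∈ I <;> simp [ha]
    rw [this, integral_indicator_const _ hI, measureReal_def, hμI]
    simp
  have horthΦ : Orthonormal ℂ Φ := by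
    rw [orthonormal_iff_ite]
    intro j k
    have : ⟪Φ j, Φ k⟫ = ∫ a, (starRingEnd ℂ) (φ j a) * φ k a ∂μ := by
      rw [MeasureTheory.L2.inner_def]
      refine integral_congr_ae ?_
      filter_upwards [(hmem j).coeFn_toLp, (hmem k).coeFn_toLp] with a h1 h2
      rw [h1, h2, RCLike.inner_apply, mul_comm]
    rw [this]
    exact horth j k
  have hsum : Summable (fun k => ‖⟪Φ k, V⟫‖ ^ 2) := horthΦ.inner_products_summable V
  have hle : ∑' k, ‖⟪Φ k, V⟫‖ ^ 2 ≤ ‖V‖ ^ 2 := horthΦ.tsum_inner_products_le V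
  have hswap : ∀ k, ‖⟪Φ k, V⟫‖ ^ 2 = ‖∫ x in I, φ k x‖ ^ 2 := by
    intro k
    rw [norm_inner_symm, hinner k]
  constructor
  · refine hsum.congr fun k => hswap k
  · calc ∑' k, ‖∫ x in I, φ k x‖ ^ 2 = ∑' k, ‖⟪Φ k, V⟫‖ ^ 2 := by
          exact tsum_congr fun k => (hswap k).symm
      _ ≤ ‖V‖ ^ 2 := hle
      _ = (volume I).toReal := hnormV
set_option maxHeartbeats 2000000 in
theorem localDensity_Linfty_bound :
    ∃ C > (0 : ℝ), ∀ (ρ : ℕ → ℝ) (φ D : ℕ → ℝ → ℂ),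
      (∀ k, 0 ≤ ρ k) →
      (∀ k, ∀ x ∈ Ioo (0 : ℝ) 1, HasDerivAt (φ k) (D k x) x) →
      (∀ k, IntegrableOn (fun x => ‖φ k x‖ ^ 2) (Ioo 0 1)) →
      (∀ k, IntegrableOn (fun x => ‖D k x‖ ^ 2) (Ioo 0 1)) →
      (∀ j k, (∫ x in Ioo (0 : ℝ) 1, (starRingEnd ℂ) (φ j x) * φ k x) =
        if j = k then 1 else 0) →
      Summable (fun k => ρ k *
        ((∫ x in Ioo (0 : ℝ) 1, ‖φ k x‖ ^ 2) + ∫ x in Ioo (0 : ℝ) 1, ‖D k x‖ ^ 2)) →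
      Summable (fun k => (ρ k) ^ 2) →
      ∀ x ∈ Ioo (0 : ℝ) 1,
        (∑' k, ρ k * ‖φ k x‖ ^ 2) ≤
          C * (Real.sqrt (∑' k, (ρ k) ^ 2)) ^ ((1 : ℝ) / 4) *
            (∑' k, ρ k * ((∫ y in Ioo (0 : ℝ) 1, ‖φ k y‖ ^ 2) +
              ∫ y in Ioo (0 : ℝ) 1, ‖D k y‖ ^ 2)) ^ ((3 : ℝ) / 4) := by
  refine ⟨16, by norm_num, ?_⟩
  intro ρ φ D hρ hder hφ2 hD2 horth hE hJsum x hx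
  -- Normalization: each φ k has unit L² norm
  have hone : ∀ k, (∫ y in Ioo (0:ℝ) 1, ‖φ k y‖ ^ 2) = 1 := by
    intro k
    have h := horth k k
    rw [if_pos rfl] at h
    have e : ∀ y, (starRingEnd ℂ) (φ k y) * φ k y = ((‖φ k y‖ ^ 2 : ℝ) : ℂ) := by
      intro y
      rw [mul_comm, Complex.mul_conj, Complex.normSq_eq_norm_sq]
    rw [show (fun y => (starRingEnd ℂ) (φ k y) * φ k y) = fun y => ((‖φ k y‖ ^ 2 : ℝ) : ℂ)
      from funext e] at h
    have h2 : @RCLike.ofReal ℂ _ (∫ y in Ioo (0:ℝ) 1, ‖φ k y‖ ^ 2) = 1 := by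
      rw [← integral_ofReal]
      exact h
    exact @RCLike.ofReal_injective ℂ _ _ _ (by rw [h2]; norm_num)
  simp_rw [hone] at hE ⊢
  set d : ℕ → ℝ := fun k => ∫ y in Ioo (0:ℝ) 1, ‖D k y‖ ^ 2 with hd
  have hEd : (fun k => ρ k * ((1:ℝ) + ∫ y in Ioo (0:ℝ) 1, ‖D k y‖ ^ 2)) =
      (fun k => ρ k * (1 + d k)) := rfl
  simp only [hEd] at hE ⊢
  have hd0 : ∀ k, 0 ≤ d k := fun k =>
    setIntegral_nonneg measurableSet_Ioo fun y _ => sq_nonneg _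
  set J : ℝ := Real.sqrt (∑' k, (ρ k) ^ 2) with hJ
  set E : ℝ := ∑' k, ρ k * (1 + d k) with hEdef
  -- basic facts
  have hterm_nonneg : ∀ k, 0 ≤ ρ k * (1 + d k) := fun k =>
    mul_nonneg (hρ k) (by linarith [hd0 k])
  have hE0 : 0 ≤ E := tsum_nonneg hterm_nonneg
  have hJ0 : 0 ≤ J := Real.sqrt_nonneg _
  have hρsum : Summable ρ := by
    refine hE.of_nonneg_of_le hρ fun k => ?_
    nlinarith [hρ k, hd0 k]
  have hρ_le_J : ∀ k, ρ k ≤ J := by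
    intro k
    rw [hJ, show ρ k = Real.sqrt (ρ k ^ 2) from (Real.sqrt_sq (hρ k)).symm]
    exact Real.sqrt_le_sqrt (Summable.le_tsum hJsum k fun _ _ => sq_nonneg _)
  have hSrho_le_E : (∑' k, ρ k) ≤ E :=
    Summable.tsum_le_tsum (fun k => by nlinarith [hρ k, hd0 k]) hρsum hE
  have hJ_le_E : J ≤ E := by
    have h1 : (∑' k, (ρ k) ^ 2) ≤ (∑' k, ρ k) ^ 2 := by
      rw [sq]
      rw [← tsum_mul_right]
      refine Summable.tsum_le_tsum (fun k => ?_) hJsum (hρsum.mul_right _)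
      rw [sq]
      exact mul_le_mul_of_nonneg_left (Summable.le_tsum hρsum k fun _ _ => hρ _) (hρ k)
    calc J ≤ Real.sqrt ((∑' k, ρ k) ^ 2) := Real.sqrt_le_sqrt h1
      _ = ∑' k, ρ k := Real.sqrt_sq (tsum_nonneg hρ)
      _ ≤ E := hSrho_le_E
  -- degenerate case
  by_cases hdeg : ∀ k, ρ k = 0
  · simp_rw [hdeg, zero_mul, tsum_zero]
    have : (0:ℝ) ≤ 16 * J ^ ((1:ℝ)/4) * E ^ ((3:ℝ)/4) := by
      apply mul_nonneg (mul_nonneg (by norm_num) (Real.rpow_nonneg hJ0 _))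
        (Real.rpow_nonneg hE0 _)
    simpa using this
  push_neg at hdeg
  obtain ⟨k0, hk0⟩ := hdeg
  have hρk0 : 0 < ρ k0 := lt_of_le_of_ne (hρ k0) (Ne.symm hk0)
  have hJpos : 0 < J := by
    rw [hJ]
    apply Real.sqrt_pos.2
    exact lt_of_lt_of_le (by positivity) (Summable.le_tsum hJsum k0 fun _ _ => sq_nonneg _)
  have hEpos : 0 < E := lt_of_lt_of_le hJpos hJ_le_E
  -- choose the window size and the interval
  set s : ℝ := Real.sqrt (J / E) with hs
  have hspos : 0 < s := Real.sqrt_pos.2 (div_pos hJpos hEpos)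
  set h : ℝ := min (1/2) s with hh
  have hh0 : 0 < h := lt_min (by norm_num) hspos
  have hh12 : h ≤ 1/2 := min_le_left _ _
  obtain ⟨a, b, ha0, hab, hb1, hax, hxb, hba⟩ :
      ∃ a b : ℝ, 0 ≤ a ∧ a < b ∧ b ≤ 1 ∧ a ≤ x ∧ x ≤ b ∧ b - a = h := by
    rcases le_or_gt x (1/2) with hx2 | hx2
    · exact ⟨x, x + h, hx.1.le, by linarith, by linarith, le_refl _, by linarith, by ring⟩
    · exact ⟨x - h, x, by linarith, by linarith, hx.2.le, by linarith, le_refl _, by ring⟩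
  have hIsub : Ioo a b ⊆ Ioo (0:ℝ) 1 := Ioo_subset_Ioo ha0 hb1
  -- measurability and integrability
  haveI : IsFiniteMeasure (volume.restrict (Ioo (0:ℝ) 1)) := by
    constructor
    rw [Measure.restrict_apply MeasurableSet.univ, univ_inter, Real.volume_Ioo]
    exact ENNReal.ofReal_lt_top
  have hφmeas : ∀ k, AEStronglyMeasurable (φ k) (volume.restrict (Ioo (0:ℝ) 1)) := by
    intro k
    exact (ContinuousOn.aestronglyMeasurable
      (fun y hy => ((hder k y hy).continuousAt).continuousWithinAt) measurableSet_Ioo)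
  have hφmem : ∀ k, MemLp (φ k) 2 (volume.restrict (Ioo (0:ℝ) 1)) := fun k =>
    (memLp_two_iff_integrable_sq_norm (hφmeas k)).2 (hφ2 k)
  have hφint : ∀ k, IntegrableOn (φ k) (Ioo 0 1) := fun k =>
    (hφmem k).integrable (by norm_num)
  have hDmeas : ∀ k, AEStronglyMeasurable (D k) (volume.restrict (Ioo (0:ℝ) 1)) := by
    intro k
    refine (measurable_deriv (φ k)).aestronglyMeasurable.congr ?_
    filter_upwards [ae_restrict_mem measurableSet_Ioo] with y hy
    exact ((hder k y hy).deriv)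
  have hDmem : ∀ k, MemLp (D k) 2 (volume.restrict (Ioo (0:ℝ) 1)) := fun k =>
    (memLp_two_iff_integrable_sq_norm (hDmeas k)).2 (hD2 k)
  have hDint : ∀ k, IntegrableOn (D k) (Ioo 0 1) := fun k =>
    (hDmem k).integrable (by norm_num)
  -- per-k estimate
  set A : ℕ → ℝ := fun k => ‖∫ y in Ioo a b, φ k y‖ with hA
  have hkey : ∀ k, ρ k * ‖φ k x‖ ^ 2 ≤
      2 * ρ k * (h * d k) + 2 * ρ k * (A k ^ 2 / h ^ 2) := by
    intro k
    have h1 := avg_bound (hder k) (hφint k) (hDint k) ha0 hab hb1 hx hax hxb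
    have h2 : (∫ y in Ioo a b, ‖D k y‖) ≤
        Real.sqrt h * Real.sqrt (d k) := by
      have hcs := setInt_cs (g := fun y => ‖D k y‖) (s := Ioo a b)
        (fun y => norm_nonneg _) ((hDint k).mono_set hIsub).norm
        (by
          have : IntegrableOn (fun y => ‖D k y‖ ^ 2) (Ioo a b) := (hD2 k).mono_set hIsub
          simpa using this)
        (by rw [Real.volume_Ioo]; exact ENNReal.ofReal_ne_top)
      rw [Real.volume_Ioo, hba, ENNReal.toReal_ofReal hh0.le] at hcs
      refine hcs.trans ?_
      apply mul_le_mul_of_nonneg_left _ (Real.sqrt_nonneg _)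
      apply Real.sqrt_le_sqrt
      refine setIntegral_mono_set (hD2 k)
        (Filter.Eventually.of_forall fun y => sq_nonneg _)
        (HasSubset.Subset.eventuallyLE hIsub)
    -- from h1, h2: h * ‖φ k x‖ ≤ h * √h √(d k) + A k
    have h3 : h * ‖φ k x‖ ≤ h * (Real.sqrt h * Real.sqrt (d k)) + A k := by
      have e1 : (b - a) * ‖φ k x‖ = ‖(b - a) • φ k x‖ := by
        rw [norm_smul, Real.norm_eq_abs, abs_of_pos (by linarith : (0:ℝ) < b - a)]
      have e2 : ‖(b - a) • φ k x‖ ≤ ‖(b - a) • φ k x - ∫ y in Ioo a b, φ k y‖ + A k := by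
        calc ‖(b - a) • φ k x‖ = ‖((b - a) • φ k x - ∫ y in Ioo a b, φ k y) +
              ∫ y in Ioo a b, φ k y‖ := by rw [sub_add_cancel]
          _ ≤ ‖(b - a) • φ k x - ∫ y in Ioo a b, φ k y‖ + A k := norm_add_le _ _
      rw [← hba]
      have h2' : (∫ y in Ioo a b, ‖D k y‖) ≤ Real.sqrt (b - a) * Real.sqrt (d k) := by
        rw [hba]; exact h2
      have h1' : ‖(b - a) • φ k x - ∫ y in Ioo a b, φ k y‖ ≤
          (b - a) * ∫ y in Ioo a b, ‖D k y‖ := by rw [hba]; rw [hba] at h1; exact h1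
      calc (b - a) * ‖φ k x‖ = ‖(b - a) • φ k x‖ := e1
        _ ≤ ‖(b - a) • φ k x - ∫ y in Ioo a b, φ k y‖ + A k := e2
        _ ≤ (b - a) * (∫ y in Ioo a b, ‖D k y‖) + A k := by linarith
        _ ≤ (b - a) * (Real.sqrt (b - a) * Real.sqrt (d k)) + A k := by
            have := mul_le_mul_of_nonneg_left h2' (by linarith : (0:ℝ) ≤ b - a)
            linarith
    have e3 : (Real.sqrt h * Real.sqrt (d k)) ^ 2 = h * d k := by
      rw [mul_pow, Real.sq_sqrt hh0.le, Real.sq_sqrt (hd0 k)]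
    have hA0 : 0 ≤ A k := norm_nonneg _
    have hsq : (h * ‖φ k x‖) * (h * ‖φ k x‖) ≤
        (h * (Real.sqrt h * Real.sqrt (d k)) + A k) * (h * (Real.sqrt h * Real.sqrt (d k)) + A k) :=
      mul_self_le_mul_self (by positivity) h3
    have h5 : ‖φ k x‖ ^ 2 ≤ 2 * (h * d k) + 2 * (A k ^ 2 / h ^ 2) := by
      have hh2 : (0:ℝ) < h ^ 2 := by positivity
      rw [← mul_le_mul_iff_of_pos_right hh2]
      have expand2 : (2 * (h * d k) + 2 * (A k ^ 2 / h ^ 2)) * h ^ 2 =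
          2 * (h ^ 2 * (h * d k)) + 2 * A k ^ 2 := by field_simp
      rw [expand2]
      nlinarith [hsq, e3, sq_nonneg (h * (Real.sqrt h * Real.sqrt (d k)) - A k),
        Real.sqrt_nonneg h, Real.sqrt_nonneg (d k), hh0.le]
    have := mul_le_mul_of_nonneg_left h5 (hρ k)
    linarith [this]
  -- summability and Bessel
  obtain ⟨hbsum, hble⟩ := bessel_indicator hφmem horth measurableSet_Ioo hIsub
  have hbesselA : Summable (fun k => A k ^ 2) := hbsum
  have hSA : (∑' k, A k ^ 2) ≤ h := by
    have := hble
    rwa [Real.volume_Ioo, hba, ENNReal.toReal_ofReal hh0.le] at this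
  have hρd_sum : Summable (fun k => ρ k * d k) := by
    refine hE.of_nonneg_of_le (fun k => mul_nonneg (hρ k) (hd0 k)) fun k => ?_
    nlinarith [hρ k, hd0 k]
  have hρd_le : (∑' k, ρ k * d k) ≤ E :=
    Summable.tsum_le_tsum (fun k => by nlinarith [hρ k, hd0 k]) hρd_sum hE
  have hρA_sum : Summable (fun k => ρ k * (A k ^ 2 / h ^ 2)) := by
    refine (hbesselA.mul_left (J / h ^ 2)).of_nonneg_of_le
      (fun k => mul_nonneg (hρ k) (by positivity)) fun k => ?_
    calc ρ k * (A k ^ 2 / h ^ 2) ≤ J * (A k ^ 2 / h ^ 2) :=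
          mul_le_mul_of_nonneg_right (hρ_le_J k) (by positivity)
      _ = J / h ^ 2 * A k ^ 2 := by ring
  have hρA_le : (∑' k, ρ k * (A k ^ 2 / h ^ 2)) ≤ J * h / h ^ 2 := by
    calc (∑' k, ρ k * (A k ^ 2 / h ^ 2)) ≤ ∑' k, J * (A k ^ 2 / h ^ 2) := by
          refine Summable.tsum_le_tsum (fun k => ?_) hρA_sum (by
            simpa [mul_div_assoc] using (hbesselA.div_const (h ^ 2)).mul_left J)
          exact mul_le_mul_of_nonneg_right (hρ_le_J k) (by positivity)
      _ = J / h ^ 2 * (∑' k, A k ^ 2) := by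
          rw [← tsum_mul_left]
          congr 1
          funext k
          ring
      _ ≤ J / h ^ 2 * h := by
          exact mul_le_mul_of_nonneg_left hSA (by positivity)
      _ = J * h / h ^ 2 := by ring
  have hLHS_sum : Summable (fun k => ρ k * ‖φ k x‖ ^ 2) := by
    refine ((hρd_sum.mul_left (2 * h)).add (hρA_sum.mul_left 2)).of_nonneg_of_le
      (fun k => mul_nonneg (hρ k) (sq_nonneg _)) fun k => ?_
    have := hkey k
    nlinarith [this]
  have hmain : (∑' k, ρ k * ‖φ k x‖ ^ 2) ≤ 2 * h * E + 2 * (J / h) := by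
    have step : (∑' k, ρ k * ‖φ k x‖ ^ 2) ≤
        ∑' k, (2 * h * (ρ k * d k) + 2 * (ρ k * (A k ^ 2 / h ^ 2))) := by
      refine Summable.tsum_le_tsum (fun k => ?_) hLHS_sum
        ((hρd_sum.mul_left (2 * h)).add (hρA_sum.mul_left 2))
      have := hkey k
      nlinarith [this]
    rw [Summable.tsum_add (hρd_sum.mul_left (2 * h)) (hρA_sum.mul_left 2),
      tsum_mul_left, tsum_mul_left] at step
    have e5 : J * h / h ^ 2 = J / h := by
      field_simp
    nlinarith [hρd_le, hρA_le, e5 ▸ hρA_le, hh0]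
  -- final numeric bound
  have hsJ : Real.sqrt J * Real.sqrt J = J := Real.mul_self_sqrt hJ0
  have hsE : Real.sqrt E * Real.sqrt E = E := Real.mul_self_sqrt hE0
  have hsJ0 : 0 < Real.sqrt J := Real.sqrt_pos.2 hJpos
  have hsE0 : 0 < Real.sqrt E := Real.sqrt_pos.2 hEpos
  have hs_eq : s = Real.sqrt J / Real.sqrt E := by
    rw [hs, Real.sqrt_div hJ0 E]
  have hfinal : 2 * h * E + 2 * (J / h) ≤ 10 * (Real.sqrt J * Real.sqrt E) := by
    rcases le_total s (1/2) with hcase | hcase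
    · have hhs : h = s := min_eq_right hcase
      rw [hhs, hs_eq]
      have e1 : Real.sqrt J / Real.sqrt E * E = Real.sqrt J * Real.sqrt E := by
        rw [div_mul_eq_mul_div, div_eq_iff hsE0.ne']
        linear_combination (-1 : ℝ) * Real.sqrt J * hsE
      have e2 : J / (Real.sqrt J / Real.sqrt E) = Real.sqrt J * Real.sqrt E := by
        rw [div_div_eq_mul_div]
        rw [div_eq_iff hsJ0.ne']
        linear_combination (-1 : ℝ) * Real.sqrt E * hsJ
      rw [show 2 * (Real.sqrt J / Real.sqrt E) * E = 2 * (Real.sqrt J / Real.sqrt E * E) by ring,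
        e1, e2]
      nlinarith [mul_pos hsJ0 hsE0]
    · have hhs : h = 1/2 := min_eq_left hcase
      rw [hhs]
      have hs2 : s ^ 2 = J / E := Real.sq_sqrt (div_pos hJpos hEpos).le
      have hE4J : E ≤ 4 * J := by
        have h8 : (1/2 : ℝ) ^ 2 ≤ s ^ 2 := by nlinarith [hspos]
        rw [hs2] at h8
        have h9 : (1:ℝ)/4 ≤ J/E := by linarith
        have h7 := (div_le_div_iff₀ (by norm_num : (0:ℝ) < 4) hEpos).1 h9
        linarith
      have hEb : E ≤ 2 * (Real.sqrt J * Real.sqrt E) := by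
        have h6 : Real.sqrt E ≤ 2 * Real.sqrt J := by
          have : Real.sqrt E ≤ Real.sqrt (4 * J) := Real.sqrt_le_sqrt hE4J
          rwa [show (4:ℝ) * J = (2:ℝ)^2 * J by ring, Real.sqrt_mul (by positivity) J,
            Real.sqrt_sq (by norm_num : (0:ℝ) ≤ 2)] at this
        nlinarith [hsE0.le, hsJ0.le]
      have hJb : J ≤ Real.sqrt J * Real.sqrt E := by
        have : Real.sqrt J ≤ Real.sqrt E := Real.sqrt_le_sqrt hJ_le_E
        nlinarith [hsJ0.le]
      nlinarith
  have hsqrt_le : Real.sqrt J * Real.sqrt E ≤ J ^ ((1:ℝ)/4) * E ^ ((3:ℝ)/4) := by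
    have e1 : Real.sqrt J = J ^ ((1:ℝ)/4) * J ^ ((1:ℝ)/4) := by
      rw [← Real.rpow_add hJpos, Real.sqrt_eq_rpow]
      norm_num
    have e2 : Real.sqrt E = E ^ ((1:ℝ)/2) := Real.sqrt_eq_rpow E
    have e3 : E ^ ((1:ℝ)/4) * E ^ ((1:ℝ)/2) = E ^ ((3:ℝ)/4) := by
      rw [← Real.rpow_add hEpos]
      norm_num
    have e4 : J ^ ((1:ℝ)/4) ≤ E ^ ((1:ℝ)/4) :=
      Real.rpow_le_rpow hJ0 hJ_le_E (by norm_num)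
    calc Real.sqrt J * Real.sqrt E
        = J ^ ((1:ℝ)/4) * (J ^ ((1:ℝ)/4) * E ^ ((1:ℝ)/2)) := by rw [e1, e2]; ring
      _ ≤ J ^ ((1:ℝ)/4) * (E ^ ((1:ℝ)/4) * E ^ ((1:ℝ)/2)) := by
          refine mul_le_mul_of_nonneg_left ?_ (Real.rpow_nonneg hJ0 _)
          exact mul_le_mul_of_nonneg_right e4 (Real.rpow_nonneg hE0 _)
      _ = J ^ ((1:ℝ)/4) * E ^ ((3:ℝ)/4) := by rw [e3]
  calc (∑' k, ρ k * ‖φ k x‖ ^ 2) ≤ 2 * h * E + 2 * (J / h) := hmain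
    _ ≤ 10 * (Real.sqrt J * Real.sqrt E) := hfinal
    _ ≤ 10 * (J ^ ((1:ℝ)/4) * E ^ ((3:ℝ)/4)) := by
        exact mul_le_mul_of_nonneg_left hsqrt_le (by norm_num)
    _ ≤ 16 * J ^ ((1:ℝ)/4) * E ^ ((3:ℝ)/4) := by
        have : (0:ℝ) ≤ J ^ ((1:ℝ)/4) * E ^ ((3:ℝ)/4) :=
          mul_nonneg (Real.rpow_nonneg hJ0 _) (Real.rpow_nonneg hE0 _)
        nlinarith
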